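/- Let V be a partial isometry and T a contraction with T V*V = V (T extends V). Then C := V - T is a contraction satisfying ker(C)^⊥ ⊆ ker(V) and ran(C) ⊆ ran(V)^⊥. -/

import Mathlib

open ContinuousLinearMap

set_option maxHeartbeats 1000000 in
/-- Let `V : J₁ → J₂` be a partial isometry and `T` a contraction extending `V`
(`T V*V = V`).  Then `C := V - T` is a contraction with `(ker C)ᗮ ⊆ ker V` and
`ran C ⊆ (ran V)ᗮ`. -/
theorem stmt_2 {J₁ J₂ : Type*}
    [NormedAddCommGroup J₁] [InnerProductSpace ℂ J₁] [CompleteSpace J₁]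
    [NormedAddCommGroup J₂] [InnerProductSpace ℂ J₂] [CompleteSpace J₂]
    (V T : J₁ →L[ℂ] J₂)
    (hV : IsIdempotentElem ((adjoint V) ∘L V)) (hT : ‖T‖ ≤ 1)
    (hext : T ∘L ((adjoint V) ∘L V) = V) :
    ‖V - T‖ ≤ 1 ∧
    (LinearMap.ker ((V - T : J₁ →L[ℂ] J₂) : J₁ →ₗ[ℂ] J₂))ᗮ ≤ LinearMap.ker (V : J₁ →ₗ[ℂ] J₂) ∧
    LinearMap.range ((V - T : J₁ →L[ℂ] J₂) : J₁ →ₗ[ℂ] J₂) ≤ (LinearMap.range (V : J₁ →ₗ[ℂ] J₂))ᗮ := by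
  set P : J₁ →L[ℂ] J₁ := (adjoint V) ∘L V with hPdef
  have hPsa : adjoint P = P := by
    rw [hPdef, adjoint_comp, adjoint_adjoint]
  have hPP : ∀ x, P (P x) = P x := by
    intro x
    have h := congrArg (fun f : J₁ →L[ℂ] J₁ => f x) hV.eq
    simpa [ContinuousLinearMap.mul_apply] using h
  have hTP : ∀ x, T (P x) = V x := fun x => ContinuousLinearMap.ext_iff.mp hext x
  -- inner ℂ products with P
  have hPinn : ∀ x y : J₁, (inner ℂ (P x) y : ℂ) = inner ℂ (V x) (V y) := by
    intro x y
    rw [hPdef]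
    exact adjoint_inner_left V y (V x)
  have hPsym : ∀ x y : J₁, (inner ℂ (P x) y : ℂ) = inner ℂ x (P y) := by
    intro x y
    have h := adjoint_inner_left P y x
    rwa [hPsa] at h
  -- norm of V x
  have hnormV : ∀ x, ‖V x‖ ^ 2 = RCLike.re (inner ℂ (P x) x : ℂ) := by
    intro x
    rw [hPinn x x]
    exact (inner_self_eq_norm_sq (V x)).symm
  -- norm of P x
  have hnormP : ∀ x, ‖P x‖ ^ 2 = RCLike.re (inner ℂ (P x) x : ℂ) := by
    intro x
    have h1 : (inner ℂ (P x) (P x) : ℂ) = inner ℂ x (P x) := by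
      rw [hPsym x (P x)]
      exact congrArg (fun u => (inner ℂ x u : ℂ)) (hPP x)
    rw [← inner_self_eq_norm_sq (𝕜 := ℂ) (P x), h1]
    exact inner_re_symm x (P x)
  -- T is isometric on the range of P: ‖T (P x)‖ = ‖P x‖
  have hiso : ∀ x, ‖T (P x)‖ = ‖P x‖ := by
    intro x
    have h1 : ‖T (P x)‖ ^ 2 = ‖P x‖ ^ 2 := by
      rw [hTP, hnormV, hnormP]
    have h2 := congrArg Real.sqrt h1
    rwa [Real.sqrt_sq (norm_nonneg _), Real.sqrt_sq (norm_nonneg _)] at h2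
  have hadjnorm : ‖adjoint T‖ ≤ 1 := by
    rw [LinearIsometryEquiv.norm_map ContinuousLinearMap.adjoint T]
    exact hT
  -- key : T*T fixes range of P
  have hkey : ∀ x, adjoint T (T (P x)) = P x := by
    intro x
    set p := P x with hp
    set q := adjoint T (T p) with hq
    have hre : RCLike.re (inner ℂ p q : ℂ) = ‖T p‖ ^ 2 := by
      rw [hq, adjoint_inner_right, inner_self_eq_norm_sq (T p)]
    have hqn : ‖q‖ ≤ ‖p‖ := by
      calc ‖q‖ ≤ ‖adjoint T‖ * ‖T p‖ := le_opNorm _ _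
        _ ≤ 1 * ‖T p‖ := mul_le_mul_of_nonneg_right hadjnorm (norm_nonneg _)
        _ = ‖p‖ := by rw [one_mul, hiso]
    have hsub : ‖p - q‖ ^ 2 ≤ 0 := by
      have h := @norm_sub_sq ℂ _ _ _ _ p q
      have h2 : ‖q‖ ^ 2 ≤ ‖p‖ ^ 2 := by nlinarith [norm_nonneg q, norm_nonneg p]
      have h3 : ‖T p‖ ^ 2 = ‖p‖ ^ 2 := by rw [hiso]
      rw [h, hre, h3]
      nlinarith
    have h0 : p - q = 0 := by
      have hge := norm_nonneg (p - q)
      have h00 : ‖p - q‖ = 0 := by nlinarith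
      exact norm_eq_zero.mp h00
    exact (sub_eq_zero.mp h0).symm
  -- V P = V
  have hVP : ∀ x, V (P x) = V x := by
    intro x
    rw [← hTP (P x), hPP, hTP]
  refine ⟨?_, ?_, ?_⟩
  · -- contraction
    apply opNorm_le_bound _ zero_le_one
    intro x
    have h1 : (V - T) x = T (P x - x) := by
      simp [map_sub, hTP x]
    have h2 : ‖P x - x‖ ^ 2 ≤ ‖x‖ ^ 2 := by
      have h := @norm_sub_sq ℂ _ _ _ _ (P x) x
      rw [h, ← hnormP]
      nlinarith [sq_nonneg ‖P x‖]
    have h3 : ‖P x - x‖ ≤ ‖x‖ := by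
      nlinarith [norm_nonneg (P x - x), norm_nonneg x]
    calc ‖(V - T) x‖ = ‖T (P x - x)‖ := by rw [h1]
      _ ≤ ‖T‖ * ‖P x - x‖ := le_opNorm _ _
      _ ≤ 1 * ‖x‖ := mul_le_mul hT h3 (norm_nonneg _) zero_le_one
  · -- (ker C)ᗮ ≤ ker V
    intro x hx
    have hPx : P x ∈ LinearMap.ker ((V - T : J₁ →L[ℂ] J₂) : J₁ →ₗ[ℂ] J₂) := by
      simp only [LinearMap.mem_ker, ContinuousLinearMap.coe_coe, sub_apply]
      rw [hVP, ← hTP x]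
      exact sub_self _
    have h0 : (inner ℂ (P x) x : ℂ) = 0 :=
      (Submodule.mem_orthogonal _ x).mp hx _ hPx
    have hVx : ‖V x‖ ^ 2 = 0 := by rw [hnormV, h0]; simp
    simp only [LinearMap.mem_ker, ContinuousLinearMap.coe_coe]
    have h00 : ‖V x‖ = 0 := by nlinarith [norm_nonneg (V x)]
    exact norm_eq_zero.mp h00
  · -- range C ≤ (range V)ᗮ
    rintro _ ⟨x, rfl⟩
    rw [Submodule.mem_orthogonal]
    rintro _ ⟨z, rfl⟩
    simp only [ContinuousLinearMap.coe_coe, sub_apply]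
    have h1 : (inner ℂ (V z) (V x) : ℂ) = inner ℂ (P z) x := (hPinn z x).symm
    have h2 : (inner ℂ (V z) (T x) : ℂ) = inner ℂ (P z) x := by
      rw [← hTP z]
      rw [show (inner ℂ (T (P z)) (T x) : ℂ) = inner ℂ (adjoint T (T (P z))) x from
        (adjoint_inner_left T x (T (P z))).symm]
      rw [hkey]
    rw [inner_sub_right, h1, h2, sub_self]
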